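/- Let Φ, Ψ be two d×K real matrices with unit-norm columns φ_i, ψ_i, let c ∈ ℝ^K be nonnegative nonincreasing with ‖c‖₂ = 1, let p be uniformly random over all permutations of {1,…,K}, σ uniformly random over {−1,1}^K independent of p, and i_p = p⁻¹(1). Then E_p E_σ |⟨ψ_{i_p}, Φ c_{p,σ}⟩|² = (c₁²/K) Σ_i |⟨ψ_i, φ_i⟩|² + ((1−c₁²)/(K(K−1))) (‖Φ*Ψ‖_F² − Σ_i |⟨ψ_i, φ_i⟩|²). -/

import Mathlib

open scoped RealInnerProductSpace BigOperators

open Finset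

private lemma emr_sign_orth {n : ℕ} (j k : Fin n) :
    ∑ σ : Fin n → Bool, ((if σ j then (1:ℝ) else -1) * (if σ k then (1:ℝ) else -1))
      = if j = k then (2^n : ℝ) else 0 := by
  rcases eq_or_ne j k with rfl | hjk
  · rw [if_pos rfl]
    have h : ∀ σ : Fin n → Bool,
        ((if σ j then (1:ℝ) else -1) * (if σ j then (1:ℝ) else -1)) = 1 := by
      intro σ; cases σ j <;> norm_num
    rw [Finset.sum_congr rfl (fun σ _ => h σ), Finset.sum_const]
    simp [Finset.card_univ]
  · rw [if_neg hjk]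
    apply Finset.sum_ninvolution (fun σ => Function.update σ j (!σ j))
    · intro σ
      rw [Function.update_self, Function.update_of_ne (by simpa using (Ne.symm hjk))]
      cases σ j <;> cases σ k <;> norm_num
    · intro σ hσ
      intro hcontra
      have := congrFun hcontra j
      rw [Function.update_self] at this
      cases h : σ j <;> rw [h] at this <;> simp at this
    · intro σ; exact Finset.mem_univ _
    · intro σ
      funext x
      rcases eq_or_ne x j with rfl | hx
      · simp [Function.update_self]
      · simp [Function.update_of_ne hx]

private lemma emr_sign_sum {n : ℕ} (f : Fin n → ℝ) :
    ∑ σ : Fin n → Bool, (∑ j, (if σ j then (1:ℝ) else -1) * f j)^2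
      = 2^n * ∑ j, (f j)^2 := by
  have h : ∀ σ : Fin n → Bool, (∑ j, (if σ j then (1:ℝ) else -1) * f j)^2
      = ∑ j, ∑ k, ((if σ j then (1:ℝ) else -1) * (if σ k then (1:ℝ) else -1)) * (f j * f k) := by
    intro σ
    rw [pow_two, Finset.sum_mul_sum]
    exact Finset.sum_congr rfl fun j _ => Finset.sum_congr rfl fun k _ => by ring
  simp_rw [h]
  rw [Finset.sum_comm]
  have h2 : ∀ j : Fin n,
      (∑ σ : Fin n → Bool, ∑ k,
        ((if σ j then (1:ℝ) else -1) * (if σ k then (1:ℝ) else -1)) * (f j * f k))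
      = 2^n * (f j)^2 := by
    intro j
    rw [Finset.sum_comm]
    have h3 : ∀ k : Fin n,
        (∑ σ : Fin n → Bool,
          ((if σ j then (1:ℝ) else -1) * (if σ k then (1:ℝ) else -1)) * (f j * f k))
        = (if j = k then (2^n : ℝ) else 0) * (f j * f k) := by
      intro k
      rw [← Finset.sum_mul, emr_sign_orth]
    rw [Finset.sum_congr rfl fun k _ => h3 k]
    simp [pow_two]
  rw [Finset.sum_congr rfl fun j _ => h2 j, ← Finset.mul_sum]

private lemma emr_sum_perm_eval {n : ℕ} (i : Fin (n+1)) (g : Fin (n+1) → ℝ) :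
    ∑ q : Equiv.Perm (Fin (n+1)), g (q i) = (n.factorial : ℝ) * ∑ b, g b := by
  have h0 : ∑ q : Equiv.Perm (Fin (n+1)), g (q i)
      = ∑ q : Equiv.Perm (Fin (n+1)), g (q 0) := by
    rw [← Equiv.sum_comp (Equiv.mulRight (Equiv.swap (0 : Fin (n+1)) i))
      (fun q : Equiv.Perm (Fin (n+1)) => g (q i))]
    exact Finset.sum_congr rfl fun q _ => by
      simp [Equiv.Perm.mul_apply, Equiv.swap_apply_left]
  rw [h0, ← Equiv.sum_comp (Equiv.Perm.decomposeFin.symm)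
      (fun q : Equiv.Perm (Fin (n+1)) => g (q 0)), Fintype.sum_prod_type]
  simp only [Equiv.Perm.decomposeFin_symm_apply_zero, Finset.sum_const, Finset.card_univ,
    Fintype.card_perm, Fintype.card_fin, nsmul_eq_mul]
  rw [← Finset.mul_sum]

private lemma emr_sum_perm_eval_pair {n : ℕ} (i : Fin (n+2)) (hi : i ≠ 0)
    (h : Fin (n+2) → Fin (n+2) → ℝ) :
    ∑ q : Equiv.Perm (Fin (n+2)), h (q 0) (q i)
      = (n.factorial : ℝ) * ∑ e, ((∑ x, h e x) - h e e) := by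
  rw [← Equiv.sum_comp (Equiv.Perm.decomposeFin.symm)
      (fun q : Equiv.Perm (Fin (n+2)) => h (q 0) (q i)), Fintype.sum_prod_type]
  obtain ⟨i', rfl⟩ : ∃ i', i = Fin.succ i' := ⟨i.pred hi, (Fin.succ_pred _ _).symm⟩
  simp only [Equiv.Perm.decomposeFin_symm_apply_zero, Equiv.Perm.decomposeFin_symm_apply_succ]
  have key : ∀ e : Fin (n+2),
      (∑ p : Equiv.Perm (Fin (n+1)), h e (Equiv.swap 0 e (Fin.succ (p i'))))
      = (n.factorial : ℝ) * ((∑ x, h e x) - h e e) := by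
    intro e
    rw [emr_sum_perm_eval i' (fun b => h e (Equiv.swap 0 e (Fin.succ b)))]
    congr 1
    have hs := Fin.sum_univ_succ (fun x : Fin (n+2) => h e (Equiv.swap 0 e x))
    have hswap : ∑ x : Fin (n+2), h e (Equiv.swap 0 e x) = ∑ x, h e x :=
      Equiv.sum_comp (Equiv.swap 0 e) (fun x => h e x)
    rw [hswap, Equiv.swap_apply_left] at hs
    linarith
  rw [Finset.sum_congr rfl fun e _ => key e, ← Finset.mul_sum]

/-- expectation over permutations and signs of the squared inner product
with the column of `Ψ` indexed by `i_p = p⁻¹(1)`. -/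
theorem expectation_max_response_general {d K : ℕ} (hK : 2 ≤ K)
    (φ ψ : Fin K → EuclideanSpace ℝ (Fin d))
    (hφ : ∀ i, ‖φ i‖ = 1) (hψ : ∀ i, ‖ψ i‖ = 1)
    (c : Fin K → ℝ) (hc0 : ∀ i, 0 ≤ c i) (hmono : ∀ i j : Fin K, i ≤ j → c j ≤ c i)
    (hc2 : ∑ i, (c i) ^ 2 = 1) :
    (∑ p : Equiv.Perm (Fin K), ∑ σ : Fin K → Bool,
        |(⟪ψ (p.symm ⟨0, by omega⟩),
            ∑ j, ((if σ j then (1 : ℝ) else -1) * c (p j)) • φ j⟫)| ^ 2)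
      / (K.factorial * 2 ^ K)
    = (c ⟨0, by omega⟩) ^ 2 / K * ∑ i, (⟪ψ i, φ i⟫ : ℝ) ^ 2
      + (1 - (c ⟨0, by omega⟩) ^ 2) / ((K : ℝ) * ((K : ℝ) - 1)) *
          ((∑ i, ∑ j, (⟪φ i, ψ j⟫ : ℝ) ^ 2) - ∑ i, (⟪ψ i, φ i⟫ : ℝ) ^ 2) := by
  obtain ⟨m, rfl⟩ : ∃ m, K = m + 2 := ⟨K - 2, by omega⟩
  have h0 : (⟨0, by omega⟩ : Fin (m+2)) = 0 := rfl
  rw [h0]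
  set A : Fin (m+2) → Fin (m+2) → ℝ := fun i j => (⟪ψ i, φ j⟫ : ℝ)^2 with hA
  have hσ : ∀ p : Equiv.Perm (Fin (m+2)),
      (∑ σ : Fin (m+2) → Bool,
        |(⟪ψ (p.symm 0), ∑ j, ((if σ j then (1:ℝ) else -1) * c (p j)) • φ j⟫ : ℝ)|^2)
      = 2^(m+2) * ∑ j, (c (p j))^2 * A (p.symm 0) j := by
    intro p
    have hinner : ∀ σ : Fin (m+2) → Bool,
        (⟪ψ (p.symm 0), ∑ j, ((if σ j then (1:ℝ) else -1) * c (p j)) • φ j⟫ : ℝ)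
          = ∑ j, (if σ j then (1:ℝ) else -1) * (c (p j) * ⟪ψ (p.symm 0), φ j⟫) := by
      intro σ
      rw [inner_sum]
      exact Finset.sum_congr rfl fun j _ => by rw [real_inner_smul_right]; ring
    simp_rw [sq_abs, hinner]
    rw [emr_sign_sum (fun j => c (p j) * ⟪ψ (p.symm 0), φ j⟫)]
    congr 1
    exact Finset.sum_congr rfl fun j _ => by rw [hA]; ring
  rw [Finset.sum_congr rfl fun p _ => hσ p, ← Finset.mul_sum]
  have step : ∀ p : Equiv.Perm (Fin (m+2)),
      (∑ j, (c (p j))^2 * A (p.symm 0) j) = ∑ i, (c i)^2 * A (p.symm 0) (p.symm i) := by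
    intro p
    rw [← Equiv.sum_comp p (fun i => (c i)^2 * A (p.symm 0) (p.symm i))]
    exact Finset.sum_congr rfl fun j _ => by simp
  have hperm : (∑ p : Equiv.Perm (Fin (m+2)), ∑ j, (c (p j))^2 * A (p.symm 0) j)
      = ∑ q : Equiv.Perm (Fin (m+2)), ∑ i, (c i)^2 * A (q 0) (q i) := by
    rw [Finset.sum_congr rfl fun p _ => step p]
    exact Fintype.sum_equiv (Equiv.inv (Equiv.Perm (Fin (m+2)))) _
      (fun q => ∑ i, (c i)^2 * A (q 0) (q i)) (fun p => rfl)
  rw [hperm, Finset.sum_comm, Fin.sum_univ_succ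
    (f := fun i => ∑ q : Equiv.Perm (Fin (m+2)), (c i)^2 * A (q 0) (q i))]
  have t1 : (∑ q : Equiv.Perm (Fin (m+2)), (c 0)^2 * A (q 0) (q 0))
      = (c 0)^2 * (((m+1).factorial : ℝ) * ∑ b, A b b) := by
    rw [← Finset.mul_sum]
    congr 1
    exact emr_sum_perm_eval 0 (fun b => A b b)
  have t2 : ∀ i : Fin (m+1), (∑ q : Equiv.Perm (Fin (m+2)), (c i.succ)^2 * A (q 0) (q i.succ))
      = (c i.succ)^2 * ((m.factorial : ℝ) * ∑ e, ((∑ x, A e x) - A e e)) := by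
    intro i
    rw [← Finset.mul_sum]
    congr 1
    exact emr_sum_perm_eval_pair i.succ (Fin.succ_ne_zero i) A
  rw [t1, Finset.sum_congr rfl fun i _ => t2 i, ← Finset.sum_mul]
  have hsum1 : (∑ i : Fin (m+1), (c i.succ)^2) = 1 - (c 0)^2 := by
    have := Fin.sum_univ_succ (fun i : Fin (m+2) => (c i)^2)
    rw [hc2] at this
    linarith
  rw [hsum1]
  have hAsymm : (∑ i, ∑ j, (⟪φ i, ψ j⟫ : ℝ)^2) = ∑ e, ∑ x, A e x := by
    rw [Finset.sum_comm]
    exact Finset.sum_congr rfl fun e _ => Finset.sum_congr rfl fun x _ => by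
      rw [hA, real_inner_comm]
  have hdiag2 : (∑ i, (⟪ψ i, φ i⟫ : ℝ)^2) = ∑ b, A b b := rfl
  rw [hAsymm, hdiag2]
  have hsplit : (∑ e, ((∑ x, A e x) - A e e)) = (∑ e, ∑ x, A e x) - ∑ b, A b b :=
    Finset.sum_sub_distrib _ _
  rw [hsplit]
  have hfac : ((m+2).factorial : ℝ) = ((m:ℝ)+2) * (((m:ℝ)+1) * (m.factorial : ℝ)) := by
    push_cast [Nat.factorial_succ]
    ring
  have hfac1 : ((m+1).factorial : ℝ) = ((m:ℝ)+1) * (m.factorial : ℝ) := by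
    push_cast [Nat.factorial_succ]
    ring
  have hm : (m.factorial : ℝ) ≠ 0 := by positivity
  have h2 : (2:ℝ)^(m+2) ≠ 0 := by positivity
  have hn1 : ((m:ℝ)+1) ≠ 0 := by positivity
  have hn2 : ((m:ℝ)+2) ≠ 0 := by positivity
  have hn3 : ((m:ℝ)+2) * ((m:ℝ)+1) ≠ 0 := mul_ne_zero hn2 hn1
  rw [hfac1]
  push_cast [hfac]
  have hsub : ((m:ℝ) + 2) - 1 = (m:ℝ) + 1 := by ring
  rw [hsub]
  field_simp
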